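/- Let V, W be finite-dimensional normed spaces, f: V → ℝ convex, A: V → W linear, K ⊆ V a closed convex cone, b = A(x♮) with x♮ ∈ K. Define F_{r,ℓ}(x) = f(x) + r‖A(x) - b‖ + ℓ·dist(x,K). Then F_{r,ℓ} is μ-sharp around x♮ if and only if B_{V*}(0,μ) ⊆ ∂f(x♮) − A*(B_{W*}(0,r)) − (K* ∩ (x♮)^⊥ ∩ B_{V*}(0,ℓ)). -/

import Mathlib

open Pointwise

open Set Metric

section Helpers

variable {V : Type*} [NormedAddCommGroup V] [NormedSpace ℝ V]

/-- Separation lemma: if `φ + h ≥ 0`, both vanish at `x0`, `φ` convex continuous,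
`h` convex, then there is a linear functional fitting between them. -/
lemma sep_lemma {φ h : V → ℝ} {x0 : V}
    (hφ : ConvexOn ℝ Set.univ φ) (hφc : Continuous φ) (hh : ConvexOn ℝ Set.univ h)
    (hφ0 : φ x0 = 0) (hh0 : h x0 = 0) (hsum : ∀ x, 0 ≤ φ x + h x) :
    ∃ q : V →L[ℝ] ℝ, (∀ x, -(q (x - x0)) ≤ φ x) ∧ ∀ x, q (x - x0) ≤ h x := by
  set S : Set (V × ℝ) := {p | φ p.1 < p.2} with hSdef
  set T : Set (V × ℝ) := {p | p.2 ≤ -h p.1} with hTdef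
  have hSopen : IsOpen S := isOpen_lt (hφc.comp continuous_fst) continuous_snd
  have hSconv : Convex ℝ S := by
    intro p hp p' hp' a c ha hc hac
    simp only [hSdef, Set.mem_setOf_eq] at *
    have h1 := hφ.2 (Set.mem_univ p.1) (Set.mem_univ p'.1) ha hc hac
    simp only [smul_eq_mul] at h1
    have h2 : (a • p + c • p').1 = a • p.1 + c • p'.1 := rfl
    have h3 : (a • p + c • p').2 = a * p.2 + c * p'.2 := rfl
    rw [h2, h3]
    refine lt_of_le_of_lt h1 ?_
    rcases eq_or_lt_of_le ha with rfl | ha'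
    · simp only [zero_mul, zero_add] at hac ⊢
      rw [hac] at *
      simpa using hp'
    · have hcl : c * φ p'.1 ≤ c * p'.2 := mul_le_mul_of_nonneg_left hp'.le hc
      have hal : a * φ p.1 < a * p.2 := by exact mul_lt_mul_of_pos_left hp ha'
      linarith
  have hTconv : Convex ℝ T := by
    intro p hp p' hp' a c ha hc hac
    simp only [hTdef, Set.mem_setOf_eq] at *
    have h1 := hh.2 (Set.mem_univ p.1) (Set.mem_univ p'.1) ha hc hac
    simp only [smul_eq_mul] at h1
    have h2 : (a • p + c • p').1 = a • p.1 + c • p'.1 := rfl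
    have h3 : (a • p + c • p').2 = a * p.2 + c * p'.2 := rfl
    rw [h2, h3]
    have hcl : c * p'.2 ≤ c * (-h p'.1) := mul_le_mul_of_nonneg_left hp' hc
    have hal : a * p.2 ≤ a * (-h p.1) := mul_le_mul_of_nonneg_left hp ha
    linarith
  have hdisj : Disjoint S T := by
    rw [Set.disjoint_left]
    intro p hS hT
    simp only [hSdef, hTdef, Set.mem_setOf_eq] at hS hT
    have := hsum p.1
    linarith
  obtain ⟨F, u, hFS, hFT⟩ := geometric_hahn_banach_open hSconv hSopen hTconv hdisj
  set p : V →L[ℝ] ℝ := F.comp (ContinuousLinearMap.inl ℝ V ℝ) with hpdef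
  set s : ℝ := F (0, 1) with hsdef
  have hdecomp : ∀ (x : V) (t : ℝ), F (x, t) = p x + t * s := by
    intro x t
    have : ((x, t) : V × ℝ) = (x, 0) + t • ((0 : V), (1 : ℝ)) := by
      simp [Prod.ext_iff]
    rw [this, map_add, map_smul, smul_eq_mul]
    rfl
  have hS' : ∀ (x : V) (t : ℝ), φ x < t → p x + t * s < u := by
    intro x t ht
    have := hFS (x, t) ht
    rwa [hdecomp] at this
  have hT' : ∀ (x : V) (t : ℝ), t ≤ -h x → u ≤ p x + t * s := by
    intro x t ht
    have := hFT (x, t) ht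
    rwa [hdecomp] at this
  have hs_nonpos : s ≤ 0 := by
    by_contra hs
    push_neg at hs
    set t : ℝ := max 1 ((u - p x0) / s + 1) with htdef
    have h1 : φ x0 < t := by
      rw [hφ0]
      exact lt_of_lt_of_le one_pos (le_max_left _ _)
    have h2 := hS' x0 t h1
    have h3 : (u - p x0) / s + 1 ≤ t := le_max_right _ _
    have h4 : ((u - p x0) / s + 1) * s = u - p x0 + s := by
      field_simp
    have h5 : ((u - p x0) / s + 1) * s ≤ t * s := mul_le_mul_of_nonneg_right h3 hs.le
    linarith
  have hs_ne : s ≠ 0 := by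
    intro hs0
    have h1 := hS' x0 1 (by rw [hφ0]; norm_num)
    have h2 := hT' x0 0 (by rw [hh0]; norm_num)
    rw [hs0] at h1 h2
    linarith
  have hsneg : s < 0 := lt_of_le_of_ne hs_nonpos hs_ne
  have hkey : ∀ x, p x + φ x * s ≤ u := by
    intro x
    by_contra hc
    push_neg at hc
    have hε : (0 : ℝ) < (p x + φ x * s - u) / (-s) := div_pos (by linarith) (by linarith)
    have h1 : φ x < φ x + (p x + φ x * s - u) / (-s) := by linarith
    have h2 := hS' x _ h1
    have h3 : (p x + φ x * s - u) / (-s) * s = -(p x + φ x * s - u) := by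
      rw [div_mul_eq_mul_div, mul_div_assoc, div_neg, div_self hs_ne]
      ring
    nlinarith
  have hu_le : u ≤ p x0 := by
    have := hT' x0 0 (by rw [hh0]; norm_num)
    linarith
  have hu_ge : p x0 ≤ u := by
    have := hkey x0
    rw [hφ0] at this
    linarith
  have hu : u = p x0 := le_antisymm hu_le hu_ge
  refine ⟨s⁻¹ • p, ?_, ?_⟩
  · intro x
    have h1 := hkey x
    rw [hu] at h1
    have h2 : (s⁻¹ • p) (x - x0) = s⁻¹ * (p x - p x0) := by
      simp [map_sub]; ring
    rw [h2]
    have hss : s * s⁻¹ = 1 := mul_inv_cancel₀ hs_ne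
    have hinv : s⁻¹ < 0 := inv_lt_zero.mpr hsneg
    have h4 : s⁻¹ * p x0 ≤ s⁻¹ * (p x + φ x * s) := mul_le_mul_of_nonpos_left h1 hinv.le
    have h5 : s⁻¹ * (p x + φ x * s) = s⁻¹ * p x + φ x * (s * s⁻¹) := by ring
    rw [hss, mul_one] at h5
    linarith
  · intro x
    have h1 := hT' x (-h x) le_rfl
    rw [hu] at h1
    have h2 : (s⁻¹ • p) (x - x0) = s⁻¹ * (p x - p x0) := by
      simp [map_sub]; ring
    rw [h2]
    have hss : s * s⁻¹ = 1 := mul_inv_cancel₀ hs_ne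
    have hinv : s⁻¹ < 0 := inv_lt_zero.mpr hsneg
    have h4 : s⁻¹ * (p x + -h x * s) ≤ s⁻¹ * p x0 := mul_le_mul_of_nonpos_left h1 hinv.le
    have h5 : s⁻¹ * (p x + -h x * s) = s⁻¹ * p x - h x * (s * s⁻¹) := by ring
    rw [hss, mul_one] at h5
    linarith

end Helpers

section Conv
variable {V W : Type*} [NormedAddCommGroup V] [NormedSpace ℝ V]
  [NormedAddCommGroup W] [NormedSpace ℝ W]

lemma convexOn_scaled_infDist (K : Set V) (hK : Convex ℝ K) (hne : K.Nonempty)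
    (ℓ : ℝ) (hℓ : 0 ≤ ℓ) :
    ConvexOn ℝ Set.univ (fun x => ℓ * Metric.infDist x K) := by
  refine ⟨convex_univ, fun x _ y _ a c ha hc hac => ?_⟩
  simp only [smul_eq_mul]
  have key : Metric.infDist (a • x + c • y) K ≤
      a * Metric.infDist x K + c * Metric.infDist y K := by
    by_contra hlt
    push_neg at hlt
    set ε := (Metric.infDist (a • x + c • y) K - (a * Metric.infDist x K + c * Metric.infDist y K)) / 2 with hε
    have hεpos : 0 < ε := by simp only [hε]; linarith
    obtain ⟨k1, hk1K, hk1⟩ := (Metric.infDist_lt_iff hne).mp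
      (lt_add_of_pos_right (Metric.infDist x K) hεpos)
    obtain ⟨k2, hk2K, hk2⟩ := (Metric.infDist_lt_iff hne).mp
      (lt_add_of_pos_right (Metric.infDist y K) hεpos)
    have hmem : a • k1 + c • k2 ∈ K := hK hk1K hk2K ha hc hac
    have hd : dist (a • x + c • y) (a • k1 + c • k2) ≤ a * dist x k1 + c * dist y k2 := by
      rw [dist_eq_norm, dist_eq_norm, dist_eq_norm]
      have : a • x + c • y - (a • k1 + c • k2) = a • (x - k1) + c • (y - k2) := by
        rw [smul_sub, smul_sub]; abel
      rw [this]
      refine (norm_add_le _ _).trans ?_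
      rw [norm_smul, norm_smul, Real.norm_eq_abs, Real.norm_eq_abs,
        abs_of_nonneg ha, abs_of_nonneg hc]
    have h1 : Metric.infDist (a • x + c • y) K ≤ a * dist x k1 + c * dist y k2 :=
      (Metric.infDist_le_dist_of_mem hmem).trans hd
    have h2 : a * dist x k1 ≤ a * (Metric.infDist x K + ε) := mul_le_mul_of_nonneg_left hk1.le ha
    have h3 : c * dist y k2 ≤ c * (Metric.infDist y K + ε) := mul_le_mul_of_nonneg_left hk2.le hc
    have h4 : a * ε + c * ε = ε := by rw [← add_mul, hac, one_mul]
    simp only [hε] at *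
    nlinarith
  have := mul_le_mul_of_nonneg_left key hℓ
  linarith [this]

lemma convexOn_penalty (A : V →L[ℝ] W) (b : W) (r : ℝ) (hr : 0 ≤ r)
    (q : V →L[ℝ] ℝ) (x0 : V) :
    ConvexOn ℝ Set.univ (fun x => r * ‖A x - b‖ - q (x - x0)) := by
  refine ⟨convex_univ, fun x _ y _ a c ha hc hac => ?_⟩
  simp only [smul_eq_mul]
  have hA : A (a • x + c • y) - b = a • (A x - b) + c • (A y - b) := by
    have h1 : a • (A x - b) + c • (A y - b) = a • A x + c • A y - (a + c) • b := by
      rw [smul_sub, smul_sub, add_smul]; abel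
    rw [h1, hac, one_smul, map_add, map_smul, map_smul]
  have hn : ‖A (a • x + c • y) - b‖ ≤ a * ‖A x - b‖ + c * ‖A y - b‖ := by
    rw [hA]
    refine (norm_add_le _ _).trans ?_
    rw [norm_smul, norm_smul, Real.norm_eq_abs, Real.norm_eq_abs,
      abs_of_nonneg ha, abs_of_nonneg hc]
  have hrn := mul_le_mul_of_nonneg_left hn hr
  have h0 : a * q x0 + c * q x0 = q x0 := by rw [← add_mul, hac, one_mul]
  have e1 : q (a • x + c • y - x0) = a * q (x - x0) + c * q (y - x0) := by
    simp only [map_sub, map_add, map_smul, smul_eq_mul]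
    linarith
  rw [e1] at *
  linarith

end Conv


set_option maxHeartbeats 1000000 in
set_option synthInstance.maxHeartbeats 400000 in
/-- The exact penalty function `F_{r,ℓ}(x) = f(x) + r‖A x - b‖ + ℓ dist(x,K)`
is `μ`-sharp around a feasible point `x0` iff the closed dual ball of radius `μ` is
contained in `∂f(x0) − A*(B_{W*}(0,r)) − (K* ∩ x0^⊥ ∩ B_{V*}(0,ℓ))`. -/
theorem sharp_penalized_iff_dual_inclusion
    {V W : Type*} [NormedAddCommGroup V] [NormedSpace ℝ V] [FiniteDimensional ℝ V]
    [NormedAddCommGroup W] [NormedSpace ℝ W] [FiniteDimensional ℝ W]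
    (f : V → ℝ) (hf : ConvexOn ℝ Set.univ f)
    (A : V →L[ℝ] W) (K : Set V) (hKclosed : IsClosed K) (hKconv : Convex ℝ K)
    (hKcone : ∀ c : ℝ, 0 ≤ c → ∀ x ∈ K, c • x ∈ K)
    (x0 : V) (hx0K : x0 ∈ K) (b : W) (hb : b = A x0)
    (μ r ℓ : ℝ) (hμ : 0 < μ) (hr : 0 ≤ r) (hℓ : 0 ≤ ℓ) :
    (∀ x : V,
        (f x + r * ‖A x - b‖ + ℓ * Metric.infDist x K)
          - (f x0 + r * ‖A x0 - b‖ + ℓ * Metric.infDist x0 K)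
          ≥ μ * ‖x - x0‖) ↔
      Metric.closedBall (0 : V →L[ℝ] ℝ) μ ⊆
        {g : V →L[ℝ] ℝ | ∀ x : V, f x ≥ f x0 + g (x - x0)}
          - (fun y : W →L[ℝ] ℝ => y.comp A) '' Metric.closedBall 0 r
          - {z : V →L[ℝ] ℝ | (∀ v ∈ K, 0 ≤ z v) ∧ z x0 = 0 ∧ ‖z‖ ≤ ℓ} := by

  have hAx0 : ‖A x0 - b‖ = 0 := by rw [hb, sub_self, norm_zero]
  have hd0 : Metric.infDist x0 K = 0 := Metric.infDist_zero_of_mem hx0K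
  constructor
  · -- hard direction
    intro hsharp g hgball
    have hg : ‖g‖ ≤ μ := mem_closedBall_zero_iff.mp hgball
    have hfc : Continuous f :=
      continuousOn_univ.mp (hf.continuousOn isOpen_univ)
    -- the tilted function ψ
    set ψ : V → ℝ := fun x => f x - f x0 - g (x - x0) with hψdef
    have hψconv : ConvexOn ℝ Set.univ ψ := by
      refine ⟨convex_univ, fun x _ y _ a c ha hc hac => ?_⟩
      simp only [hψdef, smul_eq_mul]
      have hfc2 := hf.2 (Set.mem_univ x) (Set.mem_univ y) ha hc hac
      simp only [smul_eq_mul] at hfc2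
      have h0g : a * g x0 + c * g x0 = g x0 := by rw [← add_mul, hac, one_mul]
      have h0f : a * f x0 + c * f x0 = f x0 := by rw [← add_mul, hac, one_mul]
      have e1 : g (a • x + c • y - x0) = a * g (x - x0) + c * g (y - x0) := by
        simp only [map_sub, map_add, map_smul, smul_eq_mul]
        linarith
      rw [e1]
      linarith
    have hψcont : Continuous ψ :=
      (hfc.sub continuous_const).sub (g.continuous.comp (continuous_id.sub continuous_const))
    have hψ0 : ψ x0 = 0 := by simp [hψdef]
    set h1 : V → ℝ := fun x => r * ‖A x - b‖ + ℓ * Metric.infDist x K with hh1def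
    have hh1conv : ConvexOn ℝ Set.univ h1 := by
      refine ⟨convex_univ, fun x hx y hy a c ha hc hac => ?_⟩
      have u1 := (convexOn_penalty A b r hr 0 x0).2 hx hy ha hc hac
      have u2 := (convexOn_scaled_infDist K hKconv ⟨x0, hx0K⟩ ℓ hℓ).2 hx hy ha hc hac
      simp only [hh1def, smul_eq_mul, ContinuousLinearMap.zero_apply, sub_zero] at u1 u2 ⊢
      linarith
    have hh10 : h1 x0 = 0 := by
      simp only [hh1def, hAx0, hd0, mul_zero, add_zero]
    have hsum1 : ∀ x, 0 ≤ ψ x + h1 x := by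
      intro x
      have hsx := hsharp x
      rw [hAx0, hd0, mul_zero, mul_zero] at hsx
      have hgle : g (x - x0) ≤ μ * ‖x - x0‖ := by
        refine le_trans (le_abs_self _) ?_
        rw [← Real.norm_eq_abs]
        exact (g.le_opNorm _).trans (mul_le_mul_of_nonneg_right hg (norm_nonneg _))
      simp only [hψdef, hh1def]
      linarith
    obtain ⟨q, hq11, hq12⟩ := sep_lemma hψconv hψcont hh1conv hψ0 hh10 hsum1
    -- second separation
    set φ2 : V → ℝ := fun x => r * ‖A x - b‖ - q (x - x0) with hφ2def
    have hφ2conv : ConvexOn ℝ Set.univ φ2 := convexOn_penalty A b r hr q x0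
    have hφ2cont : Continuous φ2 :=
      ((continuous_const.mul ((A.continuous.sub continuous_const).norm)).sub
        (q.continuous.comp (continuous_id.sub continuous_const)))
    have hφ20 : φ2 x0 = 0 := by simp [hφ2def, hAx0]
    set h2 : V → ℝ := fun x => ℓ * Metric.infDist x K with hh2def
    have hh2conv : ConvexOn ℝ Set.univ h2 := convexOn_scaled_infDist K hKconv ⟨x0, hx0K⟩ ℓ hℓ
    have hh20 : h2 x0 = 0 := by simp [hh2def, hd0]
    have hsum2 : ∀ x, 0 ≤ φ2 x + h2 x := by
      intro x
      have := hq12 x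
      simp only [hφ2def, hh2def, hh1def] at this ⊢
      linarith
    obtain ⟨q2, hq21, hq22⟩ := sep_lemma hφ2conv hφ2cont hh2conv hφ20 hh20 hsum2
    simp only [hφ2def] at hq21
    simp only [hh2def] at hq22
    simp only [hψdef] at hq11
    -- the functional q - q2 is bounded by r * ‖A ·‖
    have hq1bound : ∀ w : V, (q - q2) w ≤ r * ‖A w‖ := by
      intro w
      have h := hq21 (x0 + w)
      have e1 : A (x0 + w) - b = A w := by rw [map_add, hb]; abel
      have e2 : (x0 + w) - x0 = w := by abel
      rw [e1, e2] at h
      simp only [ContinuousLinearMap.sub_apply]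
      linarith
    -- build the dual element y on W
    set Al : V →ₗ[ℝ] W := (A : V →ₗ[ℝ] W) with hAldef
    have hker : LinearMap.ker Al ≤ LinearMap.ker ((q - q2) : V →ₗ[ℝ] ℝ) := by
      intro w hw
      rw [LinearMap.mem_ker] at hw ⊢
      have hAw : A w = 0 := hw
      have hb1 := hq1bound w
      have hb2 := hq1bound (-w)
      rw [map_neg A, hAw, neg_zero, norm_zero, mul_zero, map_neg] at hb2
      rw [hAw, norm_zero, mul_zero] at hb1
      have : (q - q2) w = 0 := le_antisymm hb1 (by linarith)
      simpa using this
    set y0 : ↥(LinearMap.range Al) →ₗ[ℝ] ℝ :=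
      ((LinearMap.ker Al).liftQ ((q - q2) : V →ₗ[ℝ] ℝ) hker).comp
        (Al.quotKerEquivRange.symm : ↥(LinearMap.range Al) ≃ₗ[ℝ] (V ⧸ LinearMap.ker Al)).toLinearMap
      with hy0def
    have hy0 : ∀ (w : V) (hw : A w ∈ LinearMap.range Al), y0 ⟨A w, hw⟩ = (q - q2) w := by
      intro w hw
      have hmk : Al.quotKerEquivRange (Submodule.Quotient.mk w) = ⟨A w, hw⟩ :=
        Subtype.ext (Al.quotKerEquivRange_apply_mk w)
      simp only [hy0def, LinearMap.comp_apply, LinearEquiv.coe_coe]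
      rw [← hmk, LinearEquiv.symm_apply_apply, Submodule.liftQ_apply]
      rfl
    have hy0b : ∀ u : ↥(LinearMap.range Al), ‖y0 u‖ ≤ r * ‖u‖ := by
      rintro ⟨uval, humem⟩
      obtain ⟨w, hw⟩ := LinearMap.mem_range.mp humem
      subst hw
      have e1 : y0 ⟨Al w, humem⟩ = (q - q2) w := hy0 w humem
      rw [e1]
      have hnu : ‖(⟨Al w, humem⟩ : ↥(LinearMap.range Al))‖ = ‖A w‖ := rfl
      rw [hnu]
      have hb1 := hq1bound w
      have hb2 := hq1bound (-w)
      rw [map_neg, map_neg, norm_neg] at hb2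
      rw [Real.norm_eq_abs, abs_le]
      constructor
      · linarith
      · exact hb1
    set y0c : ↥(LinearMap.range Al) →L[ℝ] ℝ := LinearMap.mkContinuous y0 r hy0b with hy0cdef
    obtain ⟨y, hyext, hynorm⟩ := exists_extension_norm_eq (LinearMap.range Al) y0c
    have hyle : ‖y‖ ≤ r := by
      rw [hynorm]
      exact LinearMap.mkContinuous_norm_le y0 hr hy0b
    have hyA : ∀ w : V, y (A w) = (q - q2) w := by
      intro w
      have hmem : A w ∈ LinearMap.range Al := ⟨w, rfl⟩
      have h1 := hyext ⟨A w, hmem⟩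
      have h2 : y0c ⟨A w, hmem⟩ = (q - q2) w := by
        rw [hy0cdef, LinearMap.mkContinuous_apply]
        exact hy0 w hmem
      rw [← h2]
      exact h1
    -- properties of q2
    have hmem2 : (2 : ℝ) • x0 ∈ K := hKcone 2 (by norm_num) x0 hx0K
    have hmem0 : (0 : V) ∈ K := by
      have := hKcone 0 le_rfl x0 hx0K
      rwa [zero_smul] at this
    have h2' := hq22 ((2 : ℝ) • x0)
    rw [Metric.infDist_zero_of_mem hmem2, mul_zero] at h2'
    have e2 : (2 : ℝ) • x0 - x0 = x0 := by rw [two_smul]; abel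
    rw [e2] at h2'
    have h0' := hq22 0
    rw [Metric.infDist_zero_of_mem hmem0, mul_zero, zero_sub, map_neg] at h0'
    have hq2x0 : q2 x0 = 0 := le_antisymm h2' (by linarith)
    -- assemble membership
    have m1 : g - q ∈ {g' : V →L[ℝ] ℝ | ∀ x : V, f x ≥ f x0 + g' (x - x0)} := by
      intro x
      have := hq11 x
      simp only [ContinuousLinearMap.sub_apply]
      linarith
    have m2 : (-y).comp A ∈ (fun y' : W →L[ℝ] ℝ => y'.comp A) '' Metric.closedBall 0 r := by
      refine ⟨-y, ?_, rfl⟩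
      rw [mem_closedBall_zero_iff, norm_neg]
      exact hyle
    have m3 : -q2 ∈ {z : V →L[ℝ] ℝ | (∀ v ∈ K, 0 ≤ z v) ∧ z x0 = 0 ∧ ‖z‖ ≤ ℓ} := by
      refine ⟨?_, ?_, ?_⟩
      · intro v hv
        have := hq22 v
        rw [Metric.infDist_zero_of_mem hv, mul_zero, map_sub, hq2x0, sub_zero] at this
        simp only [ContinuousLinearMap.neg_apply]
        linarith
      · simp only [ContinuousLinearMap.neg_apply, hq2x0, neg_zero]
      · rw [norm_neg]
        refine ContinuousLinearMap.opNorm_le_bound q2 hℓ fun w => ?_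
        have hup : ∀ w' : V, q2 w' ≤ ℓ * ‖w'‖ := by
          intro w'
          have h := hq22 (x0 + w')
          rw [add_sub_cancel_left] at h
          have hle : Metric.infDist (x0 + w') K ≤ ‖w'‖ := by
            have h5 := Metric.infDist_le_dist_of_mem (x := x0 + w') hx0K
            rwa [dist_eq_norm, add_sub_cancel_left] at h5
          exact h.trans (mul_le_mul_of_nonneg_left hle hℓ)
        rw [Real.norm_eq_abs, abs_le]
        constructor
        · have := hup (-w)
          rw [map_neg, norm_neg] at this
          linarith
        · exact hup w
    have hycomp : y.comp A = q - q2 := by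
      ext w
      rw [ContinuousLinearMap.comp_apply]
      exact hyA w
    have hfinal : (g - q) - (-y).comp A - (-q2) = g := by
      have hneg : (-y).comp A = -(y.comp A) := by ext w; simp
      rw [hneg, hycomp]
      abel
    have := Set.sub_mem_sub (Set.sub_mem_sub m1 m2) m3
    rwa [hfinal] at this
  · -- easy direction
    intro hincl x
    by_cases hx : x = x0
    · subst hx; simp
    · obtain ⟨g, hgnorm, hgx0⟩ := exists_dual_vector ℝ (x - x0) (norm_ne_zero_iff.mpr (sub_ne_zero.mpr hx))
      have hgx : g (x - x0) = ‖x - x0‖ := by exact_mod_cast hgx0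
      have hmem : μ • g ∈ Metric.closedBall (0 : V →L[ℝ] ℝ) μ := by
        rw [mem_closedBall_zero_iff]
        refine (norm_smul_le μ g).trans ?_
        rw [hgnorm, mul_one, Real.norm_eq_abs, abs_of_pos hμ]
      obtain ⟨u, hu, z, hz3, hEq⟩ := Set.mem_sub.mp (hincl hmem)
      obtain ⟨p, hp, w, hw, hEq2⟩ := Set.mem_sub.mp hu
      obtain ⟨y, hy, rfl⟩ := hw
      rw [← hEq2] at hEq
      have hzx : z (x - x0) = z x := by rw [map_sub, hz3.2.1, sub_zero]
      have heval : μ * ‖x - x0‖ = p (x - x0) - y (A x - b) - z x := by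
        have h1 : (μ • g) (x - x0) = μ * ‖x - x0‖ := by
          rw [ContinuousLinearMap.smul_apply, hgx, smul_eq_mul]
        rw [← hEq] at h1
        simp only [ContinuousLinearMap.sub_apply, ContinuousLinearMap.comp_apply] at h1
        rw [hzx] at h1
        have hA : A (x - x0) = A x - b := by rw [map_sub, hb]
        rw [hA] at h1
        linarith
      have hyb : -(y (A x - b)) ≤ r * ‖A x - b‖ := by
        refine le_trans (neg_le_abs _) ?_
        rw [← Real.norm_eq_abs]
        exact (y.le_opNorm _).trans
          (mul_le_mul_of_nonneg_right (mem_closedBall_zero_iff.mp hy) (norm_nonneg _))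
      have hzb : -(z x) ≤ ℓ * Metric.infDist x K := by
        rcases eq_or_lt_of_le hℓ with h0 | hpos
        · have hz0 : z = 0 := norm_le_zero_iff.mp (hz3.2.2.trans_eq h0.symm)
          rw [hz0, ← h0]
          simp
        · have hb2 : ∀ k ∈ K, -(z x) ≤ ℓ * dist x k := by
            intro k hk
            have hzk : 0 ≤ z k := hz3.1 k hk
            have h2 : z (k - x) ≤ ℓ * ‖k - x‖ := by
              refine le_trans (le_abs_self _) ?_
              rw [← Real.norm_eq_abs]
              exact (z.le_opNorm _).trans
                (mul_le_mul_of_nonneg_right hz3.2.2 (norm_nonneg _))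
            rw [map_sub] at h2
            have h3 : ‖k - x‖ = dist x k := by rw [dist_eq_norm, norm_sub_rev]
            rw [h3] at h2
            linarith
          have hdiv : -(z x) / ℓ ≤ Metric.infDist x K := by
            rw [Metric.infDist_eq_iInf]
            have : Nonempty ↥K := ⟨⟨x0, hx0K⟩⟩
            refine le_ciInf fun k => ?_
            rw [div_le_iff₀ hpos]
            have := hb2 k k.2
            linarith
          rw [div_le_iff₀ hpos] at hdiv
          linarith
      rw [hAx0, hd0, mul_zero, mul_zero]
      have hpx := hp x
      linarith
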